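/- For every complex number B and every s in (0,1), the average (1/2)∫_{-1}^{1} |V - B|^{-s} dV is at most 1/(1-s). -/

import Mathlib

open MeasureTheory

private lemma frac_aux_subadd {x y p : ℝ} (hx : 0 ≤ x) (hy : 0 ≤ y) (hp : 0 ≤ p) (hp1 : p ≤ 1) :
    (x + y) ^ p ≤ x ^ p + y ^ p := by
  have h := NNReal.rpow_add_le_add_rpow x.toNNReal y.toNNReal hp hp1
  have h2 := NNReal.coe_le_coe.2 h
  push_cast at h2
  rwa [Real.coe_toNNReal _ hx, Real.coe_toNNReal _ hy] at h2

private lemma frac_aux_concave {x y p : ℝ} (hp0 : 0 ≤ p) (hp1 : p ≤ 1) (hx : 0 ≤ x) (hy : 0 ≤ y)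
    (hxy : x + y = 2) : x ^ p + y ^ p ≤ 2 := by
  have h := (Real.concaveOn_rpow hp0 hp1).2 (Set.mem_Ici.2 hx) (Set.mem_Ici.2 hy)
    (by norm_num : (0:ℝ) ≤ 1/2) (by norm_num : (0:ℝ) ≤ 1/2) (by norm_num)
  simp only [smul_eq_mul] at h
  have hone : (1/2 : ℝ) * x + (1/2) * y = 1 := by linarith
  rw [hone, Real.one_rpow] at h
  linarith

private lemma frac_aux_integrable {s : ℝ} (hs : s < 1) (a c : ℝ) :
    IntervalIntegrable (fun u : ℝ => |u| ^ (-s)) volume a c := by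
  have hr : (-1 : ℝ) < -s := by linarith
  suffices h : ∀ d : ℝ, IntervalIntegrable (fun u : ℝ => |u| ^ (-s)) volume 0 d by
    exact (h a).symm.trans (h c)
  have key : ∀ d : ℝ, 0 ≤ d → IntervalIntegrable (fun u : ℝ => |u| ^ (-s)) volume 0 d := by
    intro d hd
    have h1 : IntervalIntegrable (fun u : ℝ => u ^ (-s)) volume 0 d :=
      intervalIntegral.intervalIntegrable_rpow' hr
    apply h1.congr
    intro u hu
    rw [Set.uIoc_of_le hd] at hu
    show u ^ (-s) = |u| ^ (-s)
    rw [abs_of_pos hu.1]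
  intro d
  rcases le_total 0 d with hd | hd
  · exact key d hd
  · rw [IntervalIntegrable.iff_comp_neg]
    simpa using key (-d) (by linarith)

private lemma frac_aux_eval {s : ℝ} (hs : s < 1) {c : ℝ} (hc : 0 ≤ c) :
    ∫ u in (0:ℝ)..c, |u| ^ (-s) = c ^ (1 - s) / (1 - s) := by
  have hr : (-1 : ℝ) < -s := by linarith
  have h1 : ∫ u in (0:ℝ)..c, |u| ^ (-s) = ∫ u in (0:ℝ)..c, u ^ (-s) := by
    apply intervalIntegral.integral_congr
    intro u hu
    rw [Set.uIcc_of_le hc] at hu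
    show |u| ^ (-s) = u ^ (-s)
    rw [abs_of_nonneg hu.1]
  rw [h1, integral_rpow (Or.inl hr)]
  rw [Real.zero_rpow (by linarith : -s + 1 ≠ 0)]
  norm_num
  ring_nf

private lemma frac_aux_neg {s : ℝ} (_hs : s < 1) (c : ℝ) :
    ∫ u in (0:ℝ)..(-c), |u| ^ (-s) = - ∫ u in (0:ℝ)..c, |u| ^ (-s) := by
  have : ∫ u in (0:ℝ)..c, |(-u)| ^ (-s) = ∫ u in (-c)..(0:ℝ), |u| ^ (-s) := by
    simpa using intervalIntegral.integral_comp_neg (a := 0) (b := c) (fun u : ℝ => |u| ^ (-s))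
  simp only [abs_neg] at this
  rw [intervalIntegral.integral_symm]
  rw [← this]

private lemma frac_aux_main {s : ℝ} (hs0 : 0 < s) (hs1 : s < 1) (a : ℝ) :
    ∫ u in a..(a+2), |u| ^ (-s) ≤ 2 / (1 - s) := by
  have hp0 : (0:ℝ) < 1 - s := by linarith
  have hsplit : ∫ u in a..(a+2), |u| ^ (-s)
      = (∫ u in (0:ℝ)..(a+2), |u| ^ (-s)) - ∫ u in (0:ℝ)..a, |u| ^ (-s) := by
    rw [← intervalIntegral.integral_add_adjacent_intervals (a := a) (b := 0) (c := a+2)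
      (frac_aux_integrable hs1 a 0) (frac_aux_integrable hs1 0 (a+2))]
    rw [intervalIntegral.integral_symm]
    ring
  rw [hsplit]
  rcases le_total 0 a with ha | ha
  · rw [frac_aux_eval hs1 (by linarith : (0:ℝ) ≤ a + 2), frac_aux_eval hs1 ha]
    rw [div_sub_div_same, div_le_div_iff_of_pos_right hp0]
    have h1 : (a + 2) ^ (1-s) ≤ a ^ (1-s) + 2 ^ (1-s) :=
      frac_aux_subadd ha (by norm_num) (by linarith) (by linarith)
    have h2 : (2:ℝ) ^ (1-s) ≤ 2 ^ (1:ℝ) :=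
      Real.rpow_le_rpow_of_exponent_le (by norm_num) (by linarith)
    rw [Real.rpow_one] at h2
    linarith
  · rcases le_total (a+2) 0 with ha2 | ha2
    · have e1 : ∫ u in (0:ℝ)..(a+2), |u| ^ (-s) = - ((-(a+2)) ^ (1-s) / (1-s)) := by
        have h := frac_aux_neg hs1 (-(a+2))
        rw [neg_neg] at h
        rw [h, frac_aux_eval hs1 (by linarith : (0:ℝ) ≤ -(a+2))]
      have e2 : ∫ u in (0:ℝ)..a, |u| ^ (-s) = - ((-a) ^ (1-s) / (1-s)) := by
        have h := frac_aux_neg hs1 (-a)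
        rw [neg_neg] at h
        rw [h, frac_aux_eval hs1 (by linarith : (0:ℝ) ≤ -a)]
      rw [e1, e2]
      rw [show -((-(a+2)) ^ (1-s) / (1-s)) - -((-a) ^ (1-s) / (1-s))
          = ((-a) ^ (1-s) - (-(a+2)) ^ (1-s)) / (1-s) by ring]
      rw [div_le_div_iff_of_pos_right hp0]
      have h1 : (-a) ^ (1-s) ≤ (-(a+2)) ^ (1-s) + 2 ^ (1-s) := by
        have := frac_aux_subadd (by linarith : (0:ℝ) ≤ -(a+2)) (by norm_num : (0:ℝ) ≤ 2)
          (by linarith : (0:ℝ) ≤ 1-s) (by linarith : (1:ℝ)-s ≤ 1)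
        rw [show -(a+2) + 2 = -a by ring] at this
        exact this
      have h2 : (2:ℝ) ^ (1-s) ≤ 2 ^ (1:ℝ) :=
        Real.rpow_le_rpow_of_exponent_le (by norm_num) (by linarith)
      rw [Real.rpow_one] at h2
      linarith
    · have e2 : ∫ u in (0:ℝ)..a, |u| ^ (-s) = - ((-a) ^ (1-s) / (1-s)) := by
        have h := frac_aux_neg hs1 (-a)
        rw [neg_neg] at h
        rw [h, frac_aux_eval hs1 (by linarith : (0:ℝ) ≤ -a)]
      rw [frac_aux_eval hs1 ha2, e2]
      rw [show (a+2) ^ (1-s) / (1-s) - -((-a) ^ (1-s) / (1-s))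
          = ((a+2) ^ (1-s) + (-a) ^ (1-s)) / (1-s) by ring]
      rw [div_le_div_iff_of_pos_right hp0]
      exact frac_aux_concave (by linarith) (by linarith) (by linarith) (by linarith) (by ring)

theorem fractional_moment_bound (B : ℂ) (s : ℝ) (hs : s ∈ Set.Ioo (0:ℝ) 1) :
    (1/2) * ∫ V in (-1:ℝ)..1, ‖(V:ℂ) - B‖ ^ (-s) ≤ 1/(1-s) := by
  obtain ⟨hs0, hs1⟩ := hs
  set b := B.re with hb
  -- the majorant
  have hg_int : IntervalIntegrable (fun V : ℝ => |V - b| ^ (-s)) volume (-1) 1 := by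
    have := (frac_aux_integrable hs1 (-1 - b) (1 - b)).comp_sub_right b
    simpa using this
  -- a.e. pointwise bound
  have hae : ∀ᵐ V : ℝ, ‖(V:ℂ) - B‖ ^ (-s) ≤ |V - b| ^ (-s) := by
    have hb0 : (volume : Measure ℝ) {b} = 0 := measure_singleton b
    filter_upwards [compl_mem_ae_iff.2 hb0] with V hV
    have hVb : V ≠ b := by simpa using hV
    have habs : |V - b| ≤ ‖(V:ℂ) - B‖ := by
      have := Complex.abs_re_le_norm ((V:ℂ) - B)
      simpa [Complex.sub_re] using this
    exact Real.rpow_le_rpow_of_nonpos (abs_pos.2 (sub_ne_zero.2 hVb)) habs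
      (neg_nonpos.2 hs0.le)
  -- integrability of f
  have hf_meas : Measurable (fun V : ℝ => ‖(V:ℂ) - B‖ ^ (-s)) := by
    have : Continuous (fun V : ℝ => ‖(V:ℂ) - B‖) :=
      continuous_norm.comp (Complex.continuous_ofReal.sub continuous_const)
    exact this.measurable.pow_const (-s)
  have hf_int : IntervalIntegrable (fun V : ℝ => ‖(V:ℂ) - B‖ ^ (-s)) volume (-1) 1 := by
    apply hg_int.mono_fun hf_meas.aestronglyMeasurable.restrict
    filter_upwards [ae_restrict_of_ae hae] with V hV
    rw [Real.norm_eq_abs, Real.norm_eq_abs, abs_of_nonneg (Real.rpow_nonneg (by positivity) _),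
      abs_of_nonneg (Real.rpow_nonneg (abs_nonneg _) _)]
    exact hV
  have hmono : (∫ V in (-1:ℝ)..1, ‖(V:ℂ) - B‖ ^ (-s))
      ≤ ∫ V in (-1:ℝ)..1, |V - b| ^ (-s) :=
    intervalIntegral.integral_mono_ae (by norm_num) hf_int hg_int hae
  have hshift : (∫ V in (-1:ℝ)..1, |V - b| ^ (-s))
      = ∫ u in (-1 - b)..(1 - b), |u| ^ (-s) :=
    intervalIntegral.integral_comp_sub_right (fun u : ℝ => |u| ^ (-s)) b
  have hbound : (∫ u in (-1 - b)..(1 - b), |u| ^ (-s)) ≤ 2 / (1 - s) := by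
    have := frac_aux_main hs0 hs1 (-1 - b)
    rw [show -1 - b + 2 = 1 - b by ring] at this
    exact this
  have : (∫ V in (-1:ℝ)..1, ‖(V:ℂ) - B‖ ^ (-s)) ≤ 2 / (1 - s) := by
    rw [hshift] at hmono; linarith
  have hp0 : (0:ℝ) < 1 - s := by linarith
  rw [show (1:ℝ)/(1-s) = (1/2) * (2/(1-s)) by field_simp]
  have h2 : (0:ℝ) ≤ 1/2 := by norm_num
  exact mul_le_mul_of_nonneg_left this h2
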